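/- If a ring R admits a finite cover by proper left ideals, then R contains a two-sided ideal I of finite index such that η_ℓ(R) = η_ℓ(R/I). -/

import Mathlib

/-- Left ideal of a (not necessarily unital) ring, as a set. -/
def IsLeftIdeal {R : Type*} [NonUnitalRing R] (L : Set R) : Prop :=
  0 ∈ L ∧ (∀ a ∈ L, ∀ b ∈ L, a + b ∈ L) ∧ (∀ a ∈ L, -a ∈ L) ∧
    ∀ (r : R), ∀ a ∈ L, r * a ∈ L

/-- Two-sided ideal of a (not necessarily unital) ring, as a set. -/
def IsTwoSidedIdealSet {R : Type*} [NonUnitalRing R] (I : Set R) : Prop :=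
  0 ∈ I ∧ (∀ a ∈ I, ∀ b ∈ I, a + b ∈ I) ∧ (∀ a ∈ I, -a ∈ I) ∧
    (∀ (r : R), ∀ a ∈ I, r * a ∈ I) ∧ ∀ (r : R), ∀ a ∈ I, a * r ∈ I

/-- `R` has a cover by `m` proper left ideals. -/
def HasLeftIdealCover (R : Type*) [NonUnitalRing R] (m : ℕ) : Prop :=
  ∃ L : Fin m → Set R, (∀ i, IsLeftIdeal (L i) ∧ L i ≠ Set.univ) ∧ ⋃ i, L i = Set.univ

/-- The left ideal covering number `η_ℓ(R)`. -/
noncomputable def etaL (R : Type*) [NonUnitalRing R] : ℕ∞ :=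
  sInf {n : ℕ∞ | ∃ k : ℕ, HasLeftIdealCover R k ∧ n = (k : ℕ∞)}

open scoped Pointwise

private lemma etaL_eq_natInf (A : Type*) [NonUnitalRing A]
    (hne : {k : ℕ | HasLeftIdealCover A k}.Nonempty) :
    etaL A = ((sInf {k : ℕ | HasLeftIdealCover A k} : ℕ) : ℕ∞) := by
  apply le_antisymm
  · exact sInf_le ⟨_, Nat.sInf_mem hne, rfl⟩
  · apply le_sInf
    rintro n ⟨k, hk, rfl⟩
    exact_mod_cast Nat.sInf_le hk

/-- A cover of the quotient pulls back to a cover of the ring. -/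
private lemma pullback_cover {R : Type*} [NonUnitalRing R] (c : RingCon R) (k : ℕ)
    (h : HasLeftIdealCover c.Quotient k) : HasLeftIdealCover R k := by
  obtain ⟨M, hM, hMcov⟩ := h
  refine ⟨fun i => (fun x : R => (x : c.Quotient)) ⁻¹' (M i),
    fun i => ⟨⟨?_, ?_, ?_, ?_⟩, ?_⟩, ?_⟩
  · show ((0 : R) : c.Quotient) ∈ M i
    rw [c.coe_zero]; exact (hM i).1.1
  · intro a ha b hb
    show ((a + b : R) : c.Quotient) ∈ M i
    rw [c.coe_add]; exact (hM i).1.2.1 _ ha _ hb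
  · intro a ha
    show ((-a : R) : c.Quotient) ∈ M i
    have : ((-a : R) : c.Quotient) = -(a : c.Quotient) := rfl
    rw [this]; exact (hM i).1.2.2.1 _ ha
  · intro r a ha
    show ((r * a : R) : c.Quotient) ∈ M i
    rw [c.coe_mul]; exact (hM i).1.2.2.2 _ _ ha
  · intro hcon
    apply (hM i).2
    rw [Set.eq_univ_iff_forall] at hcon ⊢
    intro q
    obtain ⟨x, rfl⟩ := Quotient.exists_rep q
    exact hcon x
  · ext x
    simp only [Set.mem_univ, iff_true, Set.mem_iUnion, Set.mem_preimage]
    have hx : ((x : R) : c.Quotient) ∈ ⋃ i, M i := by rw [hMcov]; trivial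
    exact Set.mem_iUnion.mp hx

/-- If a ring `R` admits a finite cover by proper left ideals, then `R` contains a
two-sided ideal `I` of finite index with `η_ℓ(R) = η_ℓ(R/I)` (the quotient being
realized by the ring congruence `x ~ y ↔ x - y ∈ I`). -/
theorem exists_finite_index_ideal_same_etaL {R : Type*} [NonUnitalRing R]
    (h : etaL R ≠ ⊤) :
    ∃ I : Set R, IsTwoSidedIdealSet I ∧
      ∃ c : RingCon R, (∀ x y : R, c x y ↔ x - y ∈ I) ∧
        Finite c.Quotient ∧ etaL R = etaL c.Quotient := by
  classical
  -- the set of achievable cover sizes is nonempty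
  have hSne : {k : ℕ | HasLeftIdealCover R k}.Nonempty := by
    by_contra hS
    rw [Set.not_nonempty_iff_eq_empty] at hS
    apply h
    have hempty : {n : ℕ∞ | ∃ k : ℕ, HasLeftIdealCover R k ∧ n = (k : ℕ∞)} = ∅ := by
      ext n
      simp only [Set.mem_empty_iff_false, iff_false, Set.mem_setOf_eq]
      rintro ⟨k, hk, rfl⟩
      have hmem : k ∈ {k : ℕ | HasLeftIdealCover R k} := hk
      rw [hS] at hmem
      exact hmem
    rw [etaL, hempty, sInf_empty]
  set m := sInf {k : ℕ | HasLeftIdealCover R k} with hmdef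
  obtain ⟨L, hLprop, hLcov⟩ : HasLeftIdealCover R m := Nat.sInf_mem hSne
  -- the left ideals as additive subgroups
  let H : Fin m → AddSubgroup R := fun i =>
    { carrier := L i
      zero_mem' := (hLprop i).1.1
      add_mem' := fun {a b} ha hb => (hLprop i).1.2.1 a ha b hb
      neg_mem' := fun {a} ha => (hLprop i).1.2.2.1 a ha }
  have hHL : ∀ i, (H i : Set R) = L i := fun i => rfl
  -- Neumann: by minimality of m, every member of the cover has finite additive index
  have hHfin : ∀ i, (H i).FiniteIndex := by
    by_contra hcon
    push_neg at hcon
    obtain ⟨j, hj⟩ := hcon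
    have hcov0 : ⋃ i ∈ (Finset.univ : Finset (Fin m)), ((0 : R) +ᵥ (H i : Set R)) = Set.univ := by
      simp only [zero_vadd]
      simpa [hHL] using hLcov
    have hfil := AddSubgroup.leftCoset_cover_filter_FiniteIndex hcov0
    simp only [zero_vadd] at hfil
    set t := Finset.univ.filter (fun i : Fin m => (H i).FiniteIndex) with htdef
    have hjt : j ∉ t := fun hmem => hj (Finset.mem_filter.mp hmem).2
    have htcd : t.card < m := by
      have h1 : t.card < (Finset.univ : Finset (Fin m)).card := by
        apply Finset.card_lt_card
        refine ⟨Finset.filter_subset _ _, fun hsub => hjt (hsub (Finset.mem_univ j))⟩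
      simpa using h1
    -- build a cover of size t.card
    have hcover' : HasLeftIdealCover R t.card := by
      refine ⟨fun i => L ((t.equivFin.symm i : t) : Fin m), fun i => hLprop _, ?_⟩
      have hsur : ⋃ (i : Fin t.card), (fun (x : t) => L (x : Fin m)) (t.equivFin.symm i)
          = ⋃ (x : t), L (x : Fin m) :=
        (t.equivFin.symm).surjective.iUnion_comp (fun x : t => L (x : Fin m))
      rw [hsur]
      rw [Set.iUnion_subtype]
      simpa [hHL] using hfil
    have hle : m ≤ t.card := Nat.sInf_le hcover'
    omega
  -- K : intersection of the cover, a left ideal of finite additive index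
  set K := ⨅ i, H i with hKdef
  haveI hKfin : K.FiniteIndex := AddSubgroup.finiteIndex_iInf hHfin
  have hmemK : ∀ x : R, x ∈ K ↔ ∀ i, x ∈ L i := by
    intro x
    rw [hKdef, AddSubgroup.mem_iInf]
    exact forall_congr' fun i => Iff.rfl
  have hKleft : ∀ (r x : R), x ∈ K → r * x ∈ K := by
    intro r x hx
    rw [hmemK] at hx ⊢
    exact fun i => (hLprop i).1.2.2.2 r x (hx i)
  -- the two-sided ideal
  set I : Set R := {x : R | x ∈ K ∧ ∀ r : R, x * r ∈ K} with hIdef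
  have hI0 : (0 : R) ∈ I := ⟨K.zero_mem, fun r => by rw [zero_mul]; exact K.zero_mem⟩
  have hIadd : ∀ a ∈ I, ∀ b ∈ I, a + b ∈ I := by
    rintro a ⟨ha1, ha2⟩ b ⟨hb1, hb2⟩
    exact ⟨K.add_mem ha1 hb1, fun r => by rw [add_mul]; exact K.add_mem (ha2 r) (hb2 r)⟩
  have hIneg : ∀ a ∈ I, -a ∈ I := by
    rintro a ⟨ha1, ha2⟩
    exact ⟨K.neg_mem ha1, fun r => by rw [neg_mul]; exact K.neg_mem (ha2 r)⟩
  have hIml : ∀ (r : R), ∀ a ∈ I, r * a ∈ I := by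
    rintro r a ⟨ha1, ha2⟩
    refine ⟨hKleft r a ha1, fun s => ?_⟩
    rw [mul_assoc]
    exact hKleft r _ (ha2 s)
  have hImr : ∀ (r : R), ∀ a ∈ I, a * r ∈ I := by
    rintro r a ⟨ha1, ha2⟩
    refine ⟨ha2 r, fun s => ?_⟩
    rw [mul_assoc]
    exact ha2 (r * s)
  have hI2 : IsTwoSidedIdealSet I := ⟨hI0, hIadd, hIneg, hIml, hImr⟩
  have hIsubK : ∀ x ∈ I, x ∈ K := fun x hx => hx.1
  -- the ring congruence
  let c : RingCon R :=
  { r := fun x y => x - y ∈ I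
    iseqv :=
      ⟨fun x => by simpa using hI0,
       fun {x y} hxy => by
         have := hIneg _ hxy
         simpa using this,
       fun {x y z} hxy hyz => by
         have := hIadd _ hxy _ hyz
         simpa using this⟩
    add' := fun {a b c' d} h1 h2 => by
      have := hIadd _ h1 _ h2
      simpa [sub_add_sub_comm] using this
    mul' := fun {a b c' d} h1 h2 => by
      show a * c' - b * d ∈ I
      have key : a * c' - b * d = a * (c' - d) + (a - b) * d := by
        rw [mul_sub, sub_mul]
        abel
      rw [key]
      exact hIadd _ (hIml a _ h2) _ (hImr d _ h1) }
  have hc : ∀ x y : R, c x y ↔ x - y ∈ I := fun x y => Iff.rfl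
  -- Finiteness of the quotient
  haveI : Finite (R ⧸ K) := K.finite_quotient_of_finiteIndex
  have hout : ∀ r : R, r - (QuotientAddGroup.mk (s := K) r).out ∈ K := by
    intro r
    have h1 : (QuotientAddGroup.mk (s := K) ((QuotientAddGroup.mk (s := K) r).out))
        = QuotientAddGroup.mk (s := K) r := Quotient.out_eq' _
    rw [QuotientAddGroup.eq] at h1
    rw [sub_eq_neg_add]
    exact h1
  have hfinQ : Finite c.Quotient := by
    set φ : R → (R ⧸ K) × ((R ⧸ K) → (R ⧸ K)) :=
      fun x => (QuotientAddGroup.mk x, fun q => QuotientAddGroup.mk (x * q.out)) with hφ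
    have hwd : ∀ x y : R, x - y ∈ I → φ x = φ y := by
      intro x y hxy
      have hxyK : x - y ∈ K := hIsubK _ hxy
      refine Prod.ext ?_ (funext fun q => ?_)
      · refine (QuotientAddGroup.eq).mpr ?_
        have h2 := K.neg_mem hxyK
        rw [neg_sub, sub_eq_neg_add] at h2
        exact h2
      · refine (QuotientAddGroup.eq).mpr ?_
        have h2 := K.neg_mem (hxy.2 q.out)
        rw [sub_mul, neg_sub, sub_eq_neg_add] at h2
        exact h2
    let F : c.Quotient → (R ⧸ K) × ((R ⧸ K) → (R ⧸ K)) :=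
      Quotient.lift φ (fun x y hxy => hwd x y hxy)
    have hFinj : Function.Injective F := by
      intro q1 q2
      induction q1 using Quotient.ind
      induction q2 using Quotient.ind
      rename_i x y
      intro hF
      have h1 : QuotientAddGroup.mk (s := K) x = QuotientAddGroup.mk (s := K) y :=
        congrArg Prod.fst hF
      have h2 : ∀ q : R ⧸ K, QuotientAddGroup.mk (s := K) (x * q.out)
          = QuotientAddGroup.mk (s := K) (y * q.out) :=
        fun q => congrFun (congrArg Prod.snd hF) q
      apply Quotient.sound
      show x - y ∈ I
      constructor
      · have h1' := K.neg_mem ((QuotientAddGroup.eq).mp h1)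
        rw [neg_add_rev, neg_neg, ← sub_eq_neg_add] at h1'
        exact h1'
      · intro r
        set q : R ⧸ K := QuotientAddGroup.mk (s := K) r with hq
        have h3 : (x - y) * q.out ∈ K := by
          have h4 := K.neg_mem ((QuotientAddGroup.eq).mp (h2 q))
          rw [neg_add_rev, neg_neg, ← sub_eq_neg_add, ← sub_mul] at h4
          exact h4
        have h5 : (x - y) * (r - q.out) ∈ K := hKleft _ _ (hout r)
        have h6 : (x - y) * r = (x - y) * q.out + (x - y) * (r - q.out) := by
          rw [← mul_add]
          congr 1
          abel
        rw [h6]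
        exact K.add_mem h3 h5
    exact Finite.of_injective F hFinj
  -- the quotient is covered by the images of the L i
  have hQcover : HasLeftIdealCover c.Quotient m := by
    refine ⟨fun i => (fun x : R => (x : c.Quotient)) '' (L i),
      fun i => ⟨⟨?_, ?_, ?_, ?_⟩, ?_⟩, ?_⟩
    · exact ⟨0, (hLprop i).1.1, c.coe_zero⟩
    · rintro _ ⟨a, ha, rfl⟩ _ ⟨b, hb, rfl⟩
      exact ⟨a + b, (hLprop i).1.2.1 a ha b hb, (c.coe_add a b)⟩
    · rintro _ ⟨a, ha, rfl⟩
      exact ⟨-a, (hLprop i).1.2.2.1 a ha, rfl⟩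
    · rintro r _ ⟨a, ha, rfl⟩
      obtain ⟨s, rfl⟩ := Quotient.exists_rep r
      exact ⟨s * a, (hLprop i).1.2.2.2 s a ha, c.coe_mul s a⟩
    · intro hcon
      apply (hLprop i).2
      rw [Set.eq_univ_iff_forall] at hcon
      ext x
      simp only [Set.mem_univ, iff_true]
      obtain ⟨a, ha, hax⟩ := hcon ((x : R) : c.Quotient)
      have hca : c a x := c.eq.mp hax
      have : a - x ∈ I := (hc a x).mp hca
      have haxK : a - x ∈ L i := by
        have := hIsubK _ this
        rw [hmemK] at this
        exact this i
      have : x = a + -(a - x) := by abel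
      rw [this]
      exact (hLprop i).1.2.1 a ha _ ((hLprop i).1.2.2.1 _ haxK)
    · ext q
      simp only [Set.mem_univ, iff_true, Set.mem_iUnion]
      obtain ⟨x, rfl⟩ := Quotient.exists_rep q
      have : x ∈ ⋃ i, L i := by rw [hLcov]; trivial
      obtain ⟨i, hi⟩ := Set.mem_iUnion.mp this
      exact ⟨i, x, hi, rfl⟩
  -- conclude
  refine ⟨I, hI2, c, hc, hfinQ, ?_⟩
  have hQne : {k : ℕ | HasLeftIdealCover c.Quotient k}.Nonempty := ⟨m, hQcover⟩
  rw [etaL_eq_natInf R hSne, etaL_eq_natInf _ hQne, ← hmdef]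
  have hle1 : sInf {k : ℕ | HasLeftIdealCover c.Quotient k} ≤ m := Nat.sInf_le hQcover
  have hle2 : m ≤ sInf {k : ℕ | HasLeftIdealCover c.Quotient k} := by
    have hmem := Nat.sInf_mem hQne
    exact Nat.sInf_le (pullback_cover c _ hmem)
  have : m = sInf {k : ℕ | HasLeftIdealCover c.Quotient k} := le_antisymm hle2 hle1
  rw [this]
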